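/- For every n ≥ 2, the NFA M over {0,1} with states {0,...,n-1}, all states both initial and final, and transitions δ(i,0) = {i-1} for 1 ≤ i ≤ n-1, δ(0,0) = {n-1}, δ(i,1) = {i+1} for 0 ≤ i ≤ n-2 (δ(n-1,1) = ∅), has the property that in the subset construction all 2^n subsets are reachable from the initial set Q and are pairwise inequivalent; hence the minimal DFA for L(M) has 2^n states. -/

import Mathlib

/-- The NFA of Theorem `allinitial`: states `{0,…,n-1}`, all states both initial and
final, with `δ(i,0) = {i-1}` for `1 ≤ i ≤ n-1`, `δ(0,0) = {n-1}`, and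
`δ(i,1) = {i+1}` for `0 ≤ i ≤ n-2` (with `δ(n-1,1) = ∅`). -/
def allInitialFinalNFA (n : ℕ) : NFA (Fin 2) (Fin n) where
  step i a :=
    if a = 0 then
      if i.val = 0 then {j | j.val = n - 1} else {j | j.val + 1 = i.val}
    else
      if i.val + 2 ≤ n then {j | j.val = i.val + 1} else ∅
  start := Set.univ
  accept := Set.univ

namespace AIF

variable {n : ℕ}

open Fin.NatCast

lemma evalFrom_app (M : NFA (Fin 2) (Fin n)) (S : Set (Fin n)) (a b : List (Fin 2)) :
    M.evalFrom S (a ++ b) = M.evalFrom (M.evalFrom S a) b :=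
  List.foldl_append

lemma val_one (hn : 2 ≤ n) [NeZero n] : ((1 : Fin n)).val = 1 := by
  rw [Fin.val_one']; exact Nat.mod_eq_of_lt (by omega)

lemma val_sub_one (hn : 2 ≤ n) [NeZero n] (j : Fin n) (h : j ≠ 0) :
    (j - 1).val = j.val - 1 := by
  have hj0 : 0 < j.val := by
    rcases Nat.eq_zero_or_pos j.val with h' | h'
    · exact absurd (Fin.ext (by rw [h', Fin.val_zero])) h
    · exact h'
  rw [Fin.sub_def]
  show (n - (1 : Fin n).val + j.val) % n = j.val - 1
  rw [val_one hn]
  have e : n - 1 + j.val = (j.val - 1) + n := by omega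
  rw [e, Nat.add_mod_right, Nat.mod_eq_of_lt (by have := j.isLt; omega)]

lemma mem_step0 (hn : 2 ≤ n) [NeZero n] (i j : Fin n) :
    j ∈ (allInitialFinalNFA n).step i 0 ↔ i = j + 1 := by
  have hj := j.isLt
  have hi := i.isLt
  have hadd : (j + 1).val = (j.val + 1) % n := by rw [Fin.val_add, val_one hn]
  have hstep : (allInitialFinalNFA n).step i 0 =
      (if i.val = 0 then {j : Fin n | j.val = n - 1} else {j : Fin n | j.val + 1 = i.val}) := rfl
  rw [hstep]
  by_cases h : i.val = 0
  · rw [if_pos h]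
    simp only [Set.mem_setOf_eq, Fin.ext_iff, hadd, h]
    constructor
    · intro h'
      rw [h', show n - 1 + 1 = n from by omega, Nat.mod_self]
    · intro h'
      by_contra h''
      rw [Nat.mod_eq_of_lt (by omega)] at h'
      omega
  · rw [if_neg h]
    simp only [Set.mem_setOf_eq, Fin.ext_iff, hadd]
    constructor
    · intro h'
      rw [Nat.mod_eq_of_lt (by omega)]
      omega
    · intro h'
      rcases Nat.lt_or_ge (j.val + 1) n with h'' | h''
      · rw [Nat.mod_eq_of_lt h''] at h'
        omega
      · rw [show j.val + 1 = n from by omega, Nat.mod_self] at h'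
        omega

lemma mem_step1 (i j : Fin n) :
    j ∈ (allInitialFinalNFA n).step i 1 ↔ i.val + 1 = j.val := by
  have hstep : (allInitialFinalNFA n).step i 1 =
      (if i.val + 2 ≤ n then {j : Fin n | j.val = i.val + 1} else ∅) := rfl
  rw [hstep]
  split <;> rename_i h
  · simp only [Set.mem_setOf_eq]; omega
  · simp only [Set.mem_empty_iff_false, false_iff]
    have := j.isLt; omega

lemma stepSet0 (hn : 2 ≤ n) [NeZero n] (S : Set (Fin n)) :
    (allInitialFinalNFA n).stepSet S 0 = {j | j + 1 ∈ S} := by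
  ext j
  rw [NFA.mem_stepSet]
  constructor
  · rintro ⟨i, hi, hj⟩
    rw [mem_step0 hn] at hj; subst hj; exact hi
  · intro h
    exact ⟨j + 1, h, (mem_step0 hn _ _).mpr rfl⟩

lemma stepSet1 (hn : 2 ≤ n) [NeZero n] (S : Set (Fin n)) :
    (allInitialFinalNFA n).stepSet S 1 = {j | j ≠ 0 ∧ j - 1 ∈ S} := by
  ext j
  rw [NFA.mem_stepSet]
  constructor
  · rintro ⟨i, hi, hj⟩
    rw [mem_step1] at hj
    have hne : j ≠ 0 := by
      intro h; rw [h, Fin.val_zero] at hj; omega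
    refine ⟨hne, ?_⟩
    have : j - 1 = i := Fin.ext (by rw [val_sub_one hn j hne]; omega)
    rwa [this]
  · rintro ⟨hne, hmem⟩
    refine ⟨j - 1, hmem, (mem_step1 _ _).mpr ?_⟩
    have hj0 : 0 < j.val := by
      rcases Nat.eq_zero_or_pos j.val with h' | h'
      · exact absurd (Fin.ext (by rw [h', Fin.val_zero])) hne
      · exact h'
    rw [val_sub_one hn j hne]; omega

lemma eval_rep0 (hn : 2 ≤ n) [NeZero n] (k : ℕ) (S : Set (Fin n)) :
    (allInitialFinalNFA n).evalFrom S (List.replicate k 0) = {j | j + (k : Fin n) ∈ S} := by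
  induction k generalizing S with
  | zero => simp
  | succ k ih =>
    rw [List.replicate_succ]
    show (allInitialFinalNFA n).evalFrom
      ((allInitialFinalNFA n).stepSet S 0) (List.replicate k 0) = _
    rw [ih, stepSet0 hn]
    ext j
    simp only [Set.mem_setOf_eq]
    have h : ((k + 1 : ℕ) : Fin n) = (k : Fin n) + 1 := by push_cast; ring
    rw [h, ← add_assoc]

lemma eval_rep1 (hn : 2 ≤ n) [NeZero n] (k : ℕ) (S : Set (Fin n)) :
    (allInitialFinalNFA n).evalFrom S (List.replicate k 1) =
      {j | ∃ i ∈ S, i.val + k = j.val} := by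
  induction k generalizing S with
  | zero =>
    rw [List.replicate_zero, NFA.evalFrom_nil]
    ext j
    simp only [Set.mem_setOf_eq, Nat.add_zero]
    exact ⟨fun h => ⟨j, h, rfl⟩, fun ⟨i, hi, h⟩ => by rwa [show i = j from Fin.ext h] at hi⟩
  | succ k ih =>
    rw [List.replicate_succ]
    show (allInitialFinalNFA n).evalFrom
      ((allInitialFinalNFA n).stepSet S 1) (List.replicate k 1) = _
    rw [ih, stepSet1 hn]
    ext j
    simp only [Set.mem_setOf_eq]
    constructor
    · rintro ⟨i', ⟨hne, hmem⟩, hsum⟩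
      have hi0 : 0 < i'.val := by
        rcases Nat.eq_zero_or_pos i'.val with h' | h'
        · exact absurd (Fin.ext (by rw [h', Fin.val_zero])) hne
        · exact h'
      refine ⟨i' - 1, hmem, ?_⟩
      rw [val_sub_one hn i' hne]; omega
    · rintro ⟨i, hi, hsum⟩
      have hjlt := j.isLt
      have hilt : i.val + 1 < n := by omega
      have hne0 : (⟨i.val + 1, hilt⟩ : Fin n) ≠ 0 := by
        intro h
        have h2 : i.val + 1 = (0 : Fin n).val := congrArg Fin.val h
        rw [Fin.val_zero] at h2
        omega
      refine ⟨⟨i.val + 1, hilt⟩, ⟨hne0, ?_⟩, ?_⟩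
      · have he : (⟨i.val + 1, hilt⟩ : Fin n) - 1 = i := by
          apply Fin.ext
          rw [val_sub_one hn _ hne0]
          show i.val + 1 - 1 = i.val
          omega
        rwa [he]
      · show i.val + 1 + k = j.val
        omega

lemma cast_nsub (hn : 2 ≤ n) [NeZero n] (x : Fin n) : ((n - x.val : ℕ) : Fin n) = -x := by
  apply Fin.ext
  rw [Fin.val_natCast, Fin.neg_def]

lemma eval_distinguisher (hn : 2 ≤ n) [NeZero n] (S : Set (Fin n)) (x : Fin n) :
    ((allInitialFinalNFA n).evalFrom S
      (List.replicate x.val 0 ++ List.replicate (n - 1) 1)).Nonempty ↔ x ∈ S := by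
  rw [evalFrom_app, eval_rep0 hn, eval_rep1 hn]
  constructor
  · rintro ⟨j, i, hi, hsum⟩
    have hjlt := j.isLt
    have hi0 : i = 0 := Fin.ext (by rw [Fin.val_zero]; have := i.isLt; omega)
    rw [hi0, Set.mem_setOf_eq, zero_add, Fin.cast_val_eq_self] at hi
    exact hi
  · intro hx
    refine ⟨⟨n - 1, by omega⟩, 0, ?_, by show (0 : Fin n).val + (n - 1) = n - 1; rw [Fin.val_zero]; omega⟩
    rw [Set.mem_setOf_eq, zero_add, Fin.cast_val_eq_self]
    exact hx

lemma eval_remove (hn : 2 ≤ n) [NeZero n] (S : Set (Fin n)) (x : Fin n) :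
    (allInitialFinalNFA n).evalFrom S
      (List.replicate (x.val + 1) 0 ++ 1 :: List.replicate (n - x.val) 0) = S \ {x} := by
  rw [evalFrom_app, eval_rep0 hn]
  show (allInitialFinalNFA n).evalFrom
      ((allInitialFinalNFA n).stepSet {j | j + ((x.val + 1 : ℕ) : Fin n) ∈ S} 1)
      (List.replicate (n - x.val) 0) = S \ {x}
  rw [stepSet1 hn, eval_rep0 hn, cast_nsub hn]
  have hcast : ((x.val + 1 : ℕ) : Fin n) = x + 1 := by
    push_cast [Fin.cast_val_eq_self]
    ring
  ext j
  simp only [Set.mem_setOf_eq, Set.mem_diff, Set.mem_singleton_iff, hcast]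
  have h1 : j + -x - 1 + (x + 1) = j := by abel
  have h2 : j + -x ≠ 0 ↔ j ≠ x := by rw [← sub_eq_add_neg, sub_ne_zero]
  rw [h1, h2]
  exact and_comm

lemma reachable (hn : 2 ≤ n) [NeZero n] :
    ∀ (k : ℕ) (S : Set (Fin n)), Sᶜ.ncard ≤ k →
      ∃ w : List (Fin 2), (allInitialFinalNFA n).evalFrom Set.univ w = S := by
  intro k
  induction k with
  | zero =>
    intro S hS
    have h0 : Sᶜ = ∅ := (Set.ncard_eq_zero (Set.toFinite _)).mp (by omega)
    exact ⟨[], by rw [NFA.evalFrom_nil, ← Set.compl_empty_iff.mp h0]⟩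
  | succ k ih =>
    intro S hS
    by_cases h : Sᶜ = ∅
    · exact ⟨[], by rw [NFA.evalFrom_nil, ← Set.compl_empty_iff.mp h]⟩
    · obtain ⟨x, hx⟩ := Set.nonempty_iff_ne_empty.mpr h
      have hxS : x ∉ S := hx
      have hcard : (insert x S)ᶜ.ncard ≤ k := by
        have hci : (insert x S)ᶜ = Sᶜ \ {x} := by ext y; simp [and_comm]
        rw [hci, Set.ncard_diff_singleton_of_mem hx]
        have hpos : 0 < Sᶜ.ncard := (Set.ncard_pos (Set.toFinite _)).mpr ⟨x, hx⟩
        omega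
      obtain ⟨w', hw'⟩ := ih (insert x S) hcard
      refine ⟨w' ++ (List.replicate (x.val + 1) 0 ++ 1 :: List.replicate (n - x.val) 0), ?_⟩
      rw [evalFrom_app, hw', eval_remove hn, Set.insert_diff_self_of_notMem hxS]

end AIF

theorem allInitialFinalNFA_blowup (n : ℕ) (hn : 2 ≤ n) :
    (∀ S : Set (Fin n), ∃ w : List (Fin 2),
        (allInitialFinalNFA n).evalFrom (allInitialFinalNFA n).start w = S) ∧
    (∀ S T : Set (Fin n), S ≠ T → ∃ w : List (Fin 2),
        ¬ ((((allInitialFinalNFA n).evalFrom S w) ∩ (allInitialFinalNFA n).accept).Nonempty ↔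
           (((allInitialFinalNFA n).evalFrom T w) ∩ (allInitialFinalNFA n).accept).Nonempty)) ∧
    (∃ (τ : Type) (_ : Fintype τ) (D : DFA (Fin 2) τ),
        D.accepts = (allInitialFinalNFA n).accepts ∧ Fintype.card τ = 2 ^ n) ∧
    (∀ (τ : Type) (_ : Fintype τ) (D : DFA (Fin 2) τ),
        D.accepts = (allInitialFinalNFA n).accepts → 2 ^ n ≤ Fintype.card τ) := by
  haveI : NeZero n := ⟨by omega⟩
  have reach : ∀ S : Set (Fin n), ∃ w : List (Fin 2),
      (allInitialFinalNFA n).evalFrom (allInitialFinalNFA n).start w = S := by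
    intro S
    obtain ⟨w, hw⟩ := AIF.reachable hn Sᶜ.ncard S le_rfl
    exact ⟨w, hw⟩
  have dist : ∀ S T : Set (Fin n), S ≠ T → ∃ w : List (Fin 2),
      ¬ ((((allInitialFinalNFA n).evalFrom S w) ∩ (allInitialFinalNFA n).accept).Nonempty ↔
         (((allInitialFinalNFA n).evalFrom T w) ∩ (allInitialFinalNFA n).accept).Nonempty) := by
    intro S T hST
    have hx : ∃ x, ¬(x ∈ S ↔ x ∈ T) := by
      by_contra h
      push_neg at h
      exact hST (Set.ext h)
    obtain ⟨x, hx⟩ := hx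
    refine ⟨List.replicate x.val 0 ++ List.replicate (n - 1) 1, ?_⟩
    have hacc : (allInitialFinalNFA n).accept = Set.univ := rfl
    rw [hacc, Set.inter_univ, Set.inter_univ, AIF.eval_distinguisher hn S x,
      AIF.eval_distinguisher hn T x]
    exact hx
  refine ⟨reach, dist, ⟨Set (Fin n), inferInstance, (allInitialFinalNFA n).toDFA,
    (allInitialFinalNFA n).toDFA_correct, by rw [Fintype.card_set, Fintype.card_fin]⟩, ?_⟩
  intro τ _ D hD
  classical
  let f : Set (Fin n) → τ := fun S => D.evalFrom D.start (Classical.choose (reach S))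
  have key : ∀ (U : Set (Fin n)) (u w : List (Fin 2)),
      (allInitialFinalNFA n).evalFrom (allInitialFinalNFA n).start u = U →
      ((u ++ w) ∈ (allInitialFinalNFA n).accepts ↔
        (((allInitialFinalNFA n).evalFrom U w) ∩ (allInitialFinalNFA n).accept).Nonempty) := by
    intro U u w hu
    rw [NFA.mem_accepts]
    rw [show (allInitialFinalNFA n).evalFrom (allInitialFinalNFA n).start (u ++ w) =
        (allInitialFinalNFA n).evalFrom U w from by rw [AIF.evalFrom_app, hu]]
    constructor
    · rintro ⟨q, hq1, hq2⟩; exact ⟨q, hq2, hq1⟩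
    · rintro ⟨q, hq1, hq2⟩; exact ⟨q, hq2, hq1⟩
  have hf : Function.Injective f := by
    intro S T hfST
    by_contra hST
    obtain ⟨w, hw⟩ := dist S T hST
    apply hw
    have hS := Classical.choose_spec (reach S)
    have hT := Classical.choose_spec (reach T)
    have hDeval : D.evalFrom D.start (Classical.choose (reach S) ++ w) =
        D.evalFrom D.start (Classical.choose (reach T) ++ w) := by
      rw [DFA.evalFrom_of_append, DFA.evalFrom_of_append]
      exact congrArg (fun s => D.evalFrom s w) hfST
    have hacc : ((Classical.choose (reach S) ++ w) ∈ D.accepts) ↔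
        ((Classical.choose (reach T) ++ w) ∈ D.accepts) := by
      rw [DFA.mem_accepts, DFA.mem_accepts]
      show D.evalFrom D.start _ ∈ D.accept ↔ D.evalFrom D.start _ ∈ D.accept
      rw [hDeval]
    rw [hD] at hacc
    exact ((key S (Classical.choose (reach S)) w hS).symm.trans hacc).trans
      (key T (Classical.choose (reach T)) w hT)
  have hcard := Fintype.card_le_of_injective f hf
  rwa [Fintype.card_set, Fintype.card_fin] at hcard
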